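/- For the graph ℰ^{(8)*}: the identity det(H_A(t)) = (1−t²)(1−t⁴)(1−t⁸)²/(1−t)² implies that the formal power series expansion of (2t+t²+2t³+2t⁵+t⁶+2t⁷−2t⁸)/(1−t⁸) satisfies the Euler product relation ∏_{k≥1}(1−t^k)^{−a_k} = ∏_{s≥1} (1−t^{2s})(1−t^{4s})(1−t^{8s})²/(1−t^s)², where a_k are the coefficients of the left series. In particular, the coefficient sequence (a_k) is periodic with period 8: (a₁,…,a₈) = (2,1,2,0,2,1,2,−2). -/

import Mathlib

open PowerSeries Finset


lemma part1 (a : ℕ → ℤ) (ha : a = fun k =>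
      if k % 8 = 0 then -2 else if k % 2 = 1 then 2
      else if k % 8 = 2 ∨ k % 8 = 6 then 1 else 0) :
    ((PowerSeries.mk fun k => if k = 0 then (0 : ℚ) else (a k : ℚ)) *
        (1 - (X : ℚ⟦X⟧) ^ 8)
      = 2 * X + X ^ 2 + 2 * X ^ 3 + 2 * X ^ 5 + X ^ 6 + 2 * X ^ 7
          - 2 * X ^ 8) := by
  subst ha
  ext n
  rw [mul_sub, mul_one]
  simp only [map_sub, map_add, map_mul]
  rw [PowerSeries.coeff_mul_X_pow']
  simp only [PowerSeries.coeff_mk]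
  rcases lt_or_ge n 9 with h | h
  · interval_cases n <;> norm_num [two_mul, map_add, PowerSeries.coeff_X_pow, PowerSeries.coeff_X, PowerSeries.coeff_one]
  · have h8 : ¬ (n ≤ 8) := by omega
    have e1 : (n - 8) % 8 = n % 8 := by omega
    have e2 : (n - 8) % 2 = n % 2 := by omega
    have hn0 : ¬ (n = 0) := by omega
    have hn80 : ¬ (n - 8 = 0) := by omega
    simp only [if_neg hn0, if_neg hn80, if_pos (le_of_not_ge h8), e1, e2]
    rw [sub_self]
    have h1 : n ≠ 1 := by omega
    have h2 : n ≠ 2 := by omega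
    have h3 : n ≠ 3 := by omega
    have h5 : n ≠ 5 := by omega
    have h6 : n ≠ 6 := by omega
    have h7 : n ≠ 7 := by omega
    have hn8 : n ≠ 8 := by omega
    simp [two_mul, map_add, PowerSeries.coeff_X_pow, PowerSeries.coeff_X, h1,h2,h3,h5,h6,h7,hn8]


lemma aux_invmul (k : ℕ) (hk : 1 ≤ k) :
    ((1 - (X : ℚ⟦X⟧) ^ k)⁻¹) * (1 - (X : ℚ⟦X⟧) ^ k) = 1 := by
  apply PowerSeries.inv_mul_cancel
  simp [constantCoeff_X, zero_pow (by omega : k ≠ 0)]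


lemma aux_reindex (n d p : ℕ) (hd : 0 < d) :
    (Ideal.Quotient.mk (Ideal.span {(X : ℚ⟦X⟧) ^ (n+1)}))
        (∏ s ∈ Icc 1 n, (1 - (X : ℚ⟦X⟧) ^ (d * s)) ^ p)
      = (Ideal.Quotient.mk (Ideal.span {(X : ℚ⟦X⟧) ^ (n+1)}))
        (∏ k ∈ (Icc 1 n).filter (d ∣ ·), (1 - (X : ℚ⟦X⟧) ^ k) ^ p) := by
  set π := Ideal.Quotient.mk (Ideal.span {(X : ℚ⟦X⟧) ^ (n+1)}) with hπ
  have hXm : ∀ m : ℕ, n + 1 ≤ m → π ((X : ℚ⟦X⟧) ^ m) = 0 := by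
    intro m hm
    rw [hπ, Ideal.Quotient.eq_zero_iff_mem, Ideal.mem_span_singleton]
    exact pow_dvd_pow _ hm
  have himg : Finset.image (fun s => d * s) (Icc 1 (n / d)) = (Icc 1 n).filter (d ∣ ·) := by
    ext m
    simp only [Finset.mem_image, Finset.mem_filter, Finset.mem_Icc]
    constructor
    · rintro ⟨s, ⟨hs1, hs2⟩, rfl⟩
      refine ⟨⟨by nlinarith, ?_⟩, Dvd.intro s rfl⟩
      calc d * s = s * d := by ring
        _ ≤ n := (Nat.le_div_iff_mul_le hd).mp hs2
    · rintro ⟨⟨hm1, hm2⟩, s, rfl⟩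
      exact ⟨s, ⟨by nlinarith, (Nat.le_div_iff_mul_le hd).mpr (by rw [mul_comm]; exact hm2)⟩, rfl⟩
  have hsub : Icc 1 (n / d) ⊆ Icc 1 n := Icc_subset_Icc le_rfl (Nat.div_le_self n d)
  rw [map_prod, map_prod]
  rw [← Finset.prod_subset hsub (by
    intro s hs hs'
    simp only [mem_Icc] at hs hs'
    have hds : n + 1 ≤ d * s := by
      have h1 : n / d < s := by omega
      have h2 := (Nat.div_lt_iff_lt_mul hd).mp h1
      rw [mul_comm] at h2
      omega
    rw [map_pow, map_sub, map_one, hXm _ hds, sub_zero, one_pow])]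
  rw [← himg, Finset.prod_image (by
    intro x _ y _ h
    exact Nat.eq_of_mul_eq_mul_left hd h)]

lemma part3 (a : ℕ → ℤ) (ha : a = fun k =>
      if k % 8 = 0 then -2 else if k % 2 = 1 then 2
      else if k % 8 = 2 ∨ k % 8 = 6 then 1 else 0) (n : ℕ) :
    PowerSeries.coeff (R := ℚ) n
          (∏ k ∈ Finset.Icc 1 n,
            (if 8 ∣ k then (1 - (X : ℚ⟦X⟧) ^ k) ^ 2
             else ((1 - (X : ℚ⟦X⟧) ^ k)⁻¹) ^ (a k).toNat))
        = PowerSeries.coeff (R := ℚ) n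
          (∏ s ∈ Finset.Icc 1 n,
            ((1 - (X : ℚ⟦X⟧) ^ (2 * s)) * (1 - (X : ℚ⟦X⟧) ^ (4 * s)) *
              (1 - (X : ℚ⟦X⟧) ^ (8 * s)) ^ 2 *
              ((1 - (X : ℚ⟦X⟧) ^ s)⁻¹) ^ 2)) := by
  set F : ℕ → ℚ⟦X⟧ := fun k =>
    if 8 ∣ k then (1 - (X : ℚ⟦X⟧) ^ k) ^ 2
    else ((1 - (X : ℚ⟦X⟧) ^ k)⁻¹) ^ (a k).toNat with hF
  set G : ℕ → ℚ⟦X⟧ := fun s =>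
    (1 - (X : ℚ⟦X⟧) ^ (2 * s)) * (1 - (X : ℚ⟦X⟧) ^ (4 * s)) *
      (1 - (X : ℚ⟦X⟧) ^ (8 * s)) ^ 2 * ((1 - (X : ℚ⟦X⟧) ^ s)⁻¹) ^ 2 with hG
  set D : ℚ⟦X⟧ := ∏ k ∈ Icc 1 n, (1 - (X : ℚ⟦X⟧) ^ k) ^ 2 with hD
  -- D is a unit
  have hDu : IsUnit D := by
    rw [PowerSeries.isUnit_iff_constantCoeff, hD, map_prod]
    have : ∀ k ∈ Icc 1 n, constantCoeff (R := ℚ) ((1 - (X : ℚ⟦X⟧) ^ k) ^ 2) = 1 := by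
      intro k hk
      simp only [mem_Icc] at hk
      simp [constantCoeff_X, zero_pow (by omega : k ≠ 0)]
    rw [Finset.prod_congr rfl this]
    simp
  -- LHS * D
  have hL : (∏ k ∈ Icc 1 n, F k) * D
      = (∏ k ∈ (Icc 1 n).filter (2 ∣ ·), (1 - (X : ℚ⟦X⟧) ^ k) ^ 1) *
        ((∏ k ∈ (Icc 1 n).filter (4 ∣ ·), (1 - (X : ℚ⟦X⟧) ^ k) ^ 1) *
         (∏ k ∈ (Icc 1 n).filter (8 ∣ ·), (1 - (X : ℚ⟦X⟧) ^ k) ^ 2)) := by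
    rw [hD, ← Finset.prod_mul_distrib]
    rw [Finset.prod_filter, Finset.prod_filter, Finset.prod_filter,
        ← Finset.prod_mul_distrib, ← Finset.prod_mul_distrib]
    apply Finset.prod_congr rfl
    intro k hk
    simp only [mem_Icc] at hk
    have hu := aux_invmul k hk.1
    by_cases h8 : 8 ∣ k
    · have h2 : 2 ∣ k := dvd_trans ⟨4, rfl⟩ h8
      have h4 : 4 ∣ k := dvd_trans ⟨2, rfl⟩ h8
      simp only [hF, if_pos h8, if_pos h2, if_pos h4]
      ring
    · by_cases h2 : 2 ∣ k
      · by_cases h4 : 4 ∣ k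
        · have hak : a k = 0 := by simp only [ha]; split_ifs <;> omega
          simp only [hF, if_neg h8, if_pos h2, if_pos h4, hak, Int.toNat_zero, pow_zero]
          ring
        · have hak : a k = 1 := by simp only [ha]; split_ifs <;> omega
          simp only [hF, if_neg h8, if_pos h2, if_neg h4, hak, Int.toNat_one, pow_one]
          rw [show ((1-(X:ℚ⟦X⟧)^k)⁻¹) * (1-X^k)^2
              = ((1-X^k)⁻¹*(1-X^k))*(1-X^k) from by ring, hu]
          ring
      · have hak : a k = 2 := by simp only [ha]; split_ifs <;> omega
        have h4 : ¬ 4 ∣ k := by omega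
        simp only [hF, if_neg h8, if_neg h2, if_neg h4, hak, show ((2:ℤ).toNat) = 2 from rfl]
        rw [show ((1-(X:ℚ⟦X⟧)^k)⁻¹)^2 * (1-X^k)^2
            = ((1-X^k)⁻¹*(1-X^k))^2 from by ring, hu]
        ring
  -- RHS * D
  have hR : (∏ s ∈ Icc 1 n, G s) * D
      = (∏ s ∈ Icc 1 n, (1 - (X : ℚ⟦X⟧) ^ (2 * s)) ^ 1) *
        ((∏ s ∈ Icc 1 n, (1 - (X : ℚ⟦X⟧) ^ (4 * s)) ^ 1) *
         (∏ s ∈ Icc 1 n, (1 - (X : ℚ⟦X⟧) ^ (8 * s)) ^ 2)) := by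
    rw [hD, ← Finset.prod_mul_distrib, ← Finset.prod_mul_distrib, ← Finset.prod_mul_distrib]
    apply Finset.prod_congr rfl
    intro s hs
    simp only [mem_Icc] at hs
    have hu := aux_invmul s hs.1
    calc G s * (1 - (X:ℚ⟦X⟧) ^ s) ^ 2
        = (1 - (X:ℚ⟦X⟧) ^ (2*s)) * (1 - X ^ (4*s)) * (1 - X ^ (8*s)) ^ 2 *
            ((1 - (X:ℚ⟦X⟧) ^ s)⁻¹ * (1 - X ^ s)) ^ 2 := by rw [hG]; ring
      _ = _ := by rw [hu]; ring
  set I := Ideal.span {(X : ℚ⟦X⟧) ^ (n+1)} with hI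
  set π := Ideal.Quotient.mk I with hπ
  have key : π ((∏ k ∈ Icc 1 n, F k) * D) = π ((∏ s ∈ Icc 1 n, G s) * D) := by
    rw [hL, hR, map_mul, map_mul, map_mul, map_mul]
    rw [hπ, hI, aux_reindex n 2 1 (by norm_num), aux_reindex n 4 1 (by norm_num),
        aux_reindex n 8 2 (by norm_num)]
  have hDu' : IsUnit (π D) := hDu.map π
  rw [map_mul, map_mul] at key
  have key2 : π (∏ k ∈ Icc 1 n, F k) = π (∏ s ∈ Icc 1 n, G s) :=
    hDu'.mul_right_cancel key
  have hdvd : (X : ℚ⟦X⟧)^(n+1) ∣ (∏ k ∈ Icc 1 n, F k) - (∏ s ∈ Icc 1 n, G s) := by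
    rw [← Ideal.mem_span_singleton, ← hI]
    exact (Ideal.Quotient.eq).mp key2
  have h0 := (PowerSeries.X_pow_dvd_iff.mp hdvd) n (by omega)
  rw [map_sub] at h0
  linarith [h0]


/-- For ℰ^{(8)*}: the coefficients `a k` of
`χ(t) = (2t+t²+2t³+2t⁵+t⁶+2t⁷−2t⁸)/(1−t⁸)` are periodic with period 8,
with `(a₁,…,a₈) = (2,1,2,0,2,1,2,−2)`, and they satisfy the Euler product
relation `∏_{k≥1}(1−t^k)^{−a k} = ∏_{s≥1}(1−t^{2s})(1−t^{4s})(1−t^{8s})²/(1−t^s)²`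
(stated coefficientwise via truncated products: factors with index `> n` do not
affect the coefficient of `t^n`). -/
theorem stmt17 :
    let a : ℕ → ℤ := fun k =>
      if k % 8 = 0 then -2 else if k % 2 = 1 then 2
      else if k % 8 = 2 ∨ k % 8 = 6 then 1 else 0
    ((PowerSeries.mk fun k => if k = 0 then (0 : ℚ) else (a k : ℚ)) *
        (1 - (X : ℚ⟦X⟧) ^ 8)
      = 2 * X + X ^ 2 + 2 * X ^ 3 + 2 * X ^ 5 + X ^ 6 + 2 * X ^ 7
          - 2 * X ^ 8) ∧
    (a 1 = 2 ∧ a 2 = 1 ∧ a 3 = 2 ∧ a 4 = 0 ∧ a 5 = 2 ∧ a 6 = 1 ∧ a 7 = 2 ∧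
      a 8 = -2 ∧ ∀ k : ℕ, 1 ≤ k → a (k + 8) = a k) ∧
    (∀ n : ℕ,
      PowerSeries.coeff (R := ℚ) n
          (∏ k ∈ Finset.Icc 1 n,
            (if 8 ∣ k then (1 - (X : ℚ⟦X⟧) ^ k) ^ 2
             else ((1 - (X : ℚ⟦X⟧) ^ k)⁻¹) ^ (a k).toNat))
        = PowerSeries.coeff (R := ℚ) n
          (∏ s ∈ Finset.Icc 1 n,
            ((1 - (X : ℚ⟦X⟧) ^ (2 * s)) * (1 - (X : ℚ⟦X⟧) ^ (4 * s)) *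
              (1 - (X : ℚ⟦X⟧) ^ (8 * s)) ^ 2 *
              ((1 - (X : ℚ⟦X⟧) ^ s)⁻¹) ^ 2))) := by
  intro a
  have ha : a = fun k =>
      if k % 8 = 0 then -2 else if k % 2 = 1 then 2
      else if k % 8 = 2 ∨ k % 8 = 6 then 1 else 0 := rfl
  refine ⟨part1 a ha, ⟨?_, ?_, ?_, ?_, ?_, ?_, ?_, ?_, ?_⟩, part3 a ha⟩
  · rw [ha]; norm_num
  · rw [ha]; norm_num
  · rw [ha]; norm_num
  · rw [ha]; norm_num
  · rw [ha]; norm_num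
  · rw [ha]; norm_num
  · rw [ha]; norm_num
  · rw [ha]; norm_num
  · intro k hk
    simp only [ha]
    rw [Nat.add_mod_right, (by omega : (k + 8) % 2 = k % 2)]
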